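/- Let n ≥ 1 and let A ⊆ [0,1]^n be an antichain with respect to the coordinatewise partial order. Then the Hausdorff dimension of A is at most n − 1. -/

import Mathlib

open MeasureTheory

lemma coord_abs_le_dist {k : ℕ} (x y : EuclideanSpace ℝ (Fin k)) (i : Fin k) :
    |x i - y i| ≤ dist x y := by
  rw [EuclideanSpace.dist_eq, ← Real.sqrt_sq_eq_abs]
  apply Real.sqrt_le_sqrt
  have := Finset.single_le_sum (f := fun j => dist (x j) (y j) ^ 2)
    (fun j _ => sq_nonneg _) (Finset.mem_univ i)
  simpa [Real.dist_eq, sq_abs] using this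

/-- Any antichain in `[0,1]^n` (coordinatewise order) has
Hausdorff dimension at most `n - 1`. -/
theorem statement1 (n : ℕ) (hn : 1 ≤ n) (A : Set (EuclideanSpace ℝ (Fin n)))
    (hA : A ⊆ {x : EuclideanSpace ℝ (Fin n) | ∀ i, x i ∈ Set.Icc (0 : ℝ) 1})
    (hanti : ∀ x ∈ A, ∀ y ∈ A, (∀ i, x i ≤ y i) → x = y) :
    dimH A ≤ (n : ENNReal) - 1 := by
  obtain ⟨m, rfl⟩ : ∃ m, n = m + 1 := ⟨n - 1, (Nat.succ_pred_eq_of_pos hn).symm⟩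
  set h : EuclideanSpace ℝ (Fin (m + 1)) → EuclideanSpace ℝ (Fin m) :=
    fun x => WithLp.toLp 2 (fun i : Fin m => x i.castSucc - x (Fin.last m)) with hh
  -- key anti-Lipschitz estimate on A
  have key : ∀ x ∈ A, ∀ y ∈ A,
      dist x y ≤ 2 * Real.sqrt (m + 1) * dist (h x) (h y) := by
    intro x hx y hy
    rcases eq_or_ne x y with rfl | hne
    · simp
    set D := dist (h x) (h y) with hD
    have hD0 : (0:ℝ) ≤ D := dist_nonneg
    set c : ℝ := x (Fin.last m) - y (Fin.last m) with hc
    obtain ⟨i, hi⟩ : ∃ i, y i < x i := by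
      by_contra hcon
      push_neg at hcon
      exact hne (hanti x hx y hy fun i => (hcon i))
    obtain ⟨j, hj⟩ : ∃ j, x j < y j := by
      by_contra hcon
      push_neg at hcon
      exact hne (hanti y hy x hx fun i => (hcon i)).symm
    have hcub : c ≤ D := by
      rcases eq_or_ne j (Fin.last m) with rfl | hjl
      · have : c < 0 := by simpa [hc] using sub_neg.mpr hj
        linarith
      · obtain ⟨j', rfl⟩ := Fin.exists_castSucc_eq.mpr hjl
        have h1 : |h x j' - h y j'| ≤ D := coord_abs_le_dist (h x) (h y) j'
        have h2 : h x j' - h y j' = (x j'.castSucc - y j'.castSucc) - c := by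
          simp [hh, hc]; ring
        rw [abs_le] at h1
        have := h1.1
        rw [h2] at this
        linarith
    have hclb : -D ≤ c := by
      rcases eq_or_ne i (Fin.last m) with rfl | hil
      · have : 0 < c := by simpa [hc] using sub_pos.mpr hi
        linarith
      · obtain ⟨i', rfl⟩ := Fin.exists_castSucc_eq.mpr hil
        have h1 : |h x i' - h y i'| ≤ D := coord_abs_le_dist (h x) (h y) i'
        have h2 : h x i' - h y i' = (x i'.castSucc - y i'.castSucc) - c := by
          simp [hh, hc]; ring
        rw [abs_le] at h1
        have := h1.2
        rw [h2] at this
        linarith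
    have hcoord : ∀ k : Fin (m + 1), |x k - y k| ≤ 2 * D := by
      intro k
      rcases eq_or_ne k (Fin.last m) with rfl | hkl
      · rw [abs_le]; constructor <;> [linarith [hclb]; linarith [hcub]]
      · obtain ⟨k', rfl⟩ := Fin.exists_castSucc_eq.mpr hkl
        have h1 : |h x k' - h y k'| ≤ D := coord_abs_le_dist (h x) (h y) k'
        have h2 : x k'.castSucc - y k'.castSucc = (h x k' - h y k') + c := by
          simp [hh, hc]; ring
        rw [h2]
        calc |(h x k' - h y k') + c| ≤ |h x k' - h y k'| + |c| := abs_add_le _ _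
          _ ≤ D + D := by
              refine add_le_add h1 ?_
              rw [abs_le]; exact ⟨hclb, hcub⟩
          _ = 2 * D := by ring
    -- now bound the Euclidean distance
    rw [EuclideanSpace.dist_eq]
    have hsum : (∑ k, dist (x k) (y k) ^ 2) ≤ (m + 1 : ℝ) * (2 * D) ^ 2 := by
      calc (∑ k, dist (x k) (y k) ^ 2) ≤ ∑ _k : Fin (m+1), (2 * D) ^ 2 := by
            refine Finset.sum_le_sum fun k _ => ?_
            have := hcoord k
            have h0 : (0:ℝ) ≤ |x k - y k| := abs_nonneg _
            rw [Real.dist_eq]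
            nlinarith
        _ = (m + 1 : ℝ) * (2 * D) ^ 2 := by
            simp [Finset.sum_const, Finset.card_univ]
    calc Real.sqrt (∑ k, dist (x k) (y k) ^ 2)
        ≤ Real.sqrt ((m + 1 : ℝ) * (2 * D) ^ 2) := Real.sqrt_le_sqrt hsum
      _ = Real.sqrt (m + 1) * (2 * D) := by
          rw [Real.sqrt_mul (by positivity), Real.sqrt_sq (by positivity)]
      _ = 2 * Real.sqrt (m + 1) * D := by ring
  -- h is injective on A
  have hinj : Set.InjOn h A := by
    intro x hx y hy hxy
    have := key x hx y hy
    rw [hxy, dist_self, mul_zero] at this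
    exact dist_le_zero.mp this
  -- inverse map is Lipschitz on h '' A
  set K : NNReal := (2 * Real.sqrt (m + 1)).toNNReal with hK
  have hKcoe : (K : ℝ) = 2 * Real.sqrt (m + 1) := Real.coe_toNNReal _ (by positivity)
  set φ : EuclideanSpace ℝ (Fin m) → EuclideanSpace ℝ (Fin (m + 1)) :=
    Function.invFunOn h A with hφ
  have hleft : ∀ x ∈ A, φ (h x) = x := fun x hx => hinj.leftInvOn_invFunOn hx
  have hlip : LipschitzOnWith K φ (h '' A) := by
    rw [lipschitzOnWith_iff_dist_le_mul]
    rintro _ ⟨x, hx, rfl⟩ _ ⟨y, hy, rfl⟩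
    rw [hleft x hx, hleft y hy, hKcoe]
    exact key x hx y hy
  have himg : φ '' (h '' A) = A := by
    ext z
    constructor
    · rintro ⟨_, ⟨x, hx, rfl⟩, rfl⟩
      rw [hleft x hx]; exact hx
    · intro hz
      exact ⟨h z, ⟨z, hz, rfl⟩, hleft z hz⟩
  have hdim : dimH A ≤ dimH (Set.univ : Set (EuclideanSpace ℝ (Fin m))) := by
    calc dimH A = dimH (φ '' (h '' A)) := by rw [himg]
      _ ≤ dimH (h '' A) := hlip.dimH_image_le
      _ ≤ dimH (Set.univ : Set (EuclideanSpace ℝ (Fin m))) := dimH_mono (Set.subset_univ _)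
  have huniv : dimH (Set.univ : Set (EuclideanSpace ℝ (Fin m))) = m := by
    rw [Real.dimH_univ_eq_finrank, finrank_euclideanSpace_fin]
  have hcast : ((m + 1 : ℕ) : ENNReal) - 1 = m := by
    push_cast
    rw [ENNReal.add_sub_cancel_right ENNReal.one_ne_top]
  rw [hcast]
  rw [huniv] at hdim
  exact hdim
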